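/- Let I be a nonempty open interval with inf I = 0 and let E be a normalizable semideviation on I. Define h̲_E(x) := liminf_{t→0⁺} E*(xt,t)/t and h̄_E(x) := limsup_{t→0⁺} E*(xt,t)/t for x > 0. Assume that for every x > 0 one has −∞ < h̲_E(x) ≤ h̄_E(x) < +∞ and sign(h̲_E(x)) = sign(h̄_E(x)) = sign(x−1). Then for all n ∈ ℕ, x ∈ (0,∞)ⁿ and weight vectors λ: ℰ⁼_{h̲_E}(x,λ) ≤ liminf_{t→0⁺} UD_E(tx,λ)/t and limsup_{t→0⁺} LD_E(tx,λ)/t ≤ ℰ⁺_{h̄_E}(x,λ). -/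

import Mathlib

open Set Filter Topology


private lemma sign_pos_iff' {r : ℝ} : Real.sign r = 1 ↔ 0 < r := by
  constructor
  · intro h
    rcases lt_trichotomy r 0 with h' | h' | h'
    · rw [Real.sign_of_neg h'] at h; norm_num at h
    · rw [h', Real.sign_zero] at h; norm_num at h
    · exact h'
  · exact Real.sign_of_pos

private lemma sign_neg_iff' {r : ℝ} : Real.sign r = -1 ↔ r < 0 := by
  constructor
  · intro h
    rcases lt_trichotomy r 0 with h' | h' | h'
    · exact h'
    · rw [h', Real.sign_zero] at h; norm_num at h
    · rw [Real.sign_of_pos h'] at h; norm_num at h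
  · exact Real.sign_of_neg

private lemma exists_Ioc_subset (I : Set ℝ) (hIoc : I.OrdConnected) (hIo : IsOpen I)
    (hne : I.Nonempty) (hglb : IsGLB I 0) : ∃ a : ℝ, 0 < a ∧ Set.Ioc 0 a ⊆ I := by
  obtain ⟨a, haI⟩ := hne
  have ha0 : 0 ≤ a := hglb.1 haI
  have hapos : 0 < a := by
    rcases ha0.lt_or_eq with h | h
    · exact h
    · exfalso
      obtain ⟨ε, hε, hball⟩ := Metric.isOpen_iff.mp hIo 0 (h ▸ haI)
      have hmem : -(ε/2) ∈ I := by
        apply hball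
        simp only [Metric.mem_ball, Real.dist_eq, sub_zero, abs_neg]
        rw [abs_of_pos (by linarith)]
        linarith
      linarith [hglb.1 hmem]
  refine ⟨a, hapos, fun y hy => ?_⟩
  obtain ⟨hy0, hya⟩ := hy
  by_cases hyl : y ∈ lowerBounds I
  · linarith [hglb.2 hyl]
  · simp only [lowerBounds, Set.mem_setOf_eq] at hyl
    push_neg at hyl
    obtain ⟨z, hzI, hzy⟩ := hyl
    exact hIoc.out hzI haI ⟨hzy.le, hya⟩

private lemma ev_liminf_lt (F : Filter ℝ) [F.NeBot] (u : ℝ → ℝ) (C b : ℝ)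
    (hC : ∀ᶠ t in F, |u t| ≤ C) (hb : b < Filter.liminf u F) :
    ∀ᶠ t in F, b < u t := by
  have hne : {a : ℝ | ∀ᶠ t in F, a ≤ u t}.Nonempty :=
    ⟨-C, hC.mono fun t ht => (abs_le.mp ht).1⟩
  rw [Filter.liminf_eq] at hb
  obtain ⟨a, ha, hba⟩ := exists_lt_of_lt_csSup hne hb
  exact ha.mono fun t ht => lt_of_lt_of_le hba ht

private lemma ev_limsup_gt (F : Filter ℝ) [F.NeBot] (u : ℝ → ℝ) (C b : ℝ)
    (hC : ∀ᶠ t in F, |u t| ≤ C) (hb : Filter.limsup u F < b) :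
    ∀ᶠ t in F, u t < b := by
  have hne : {a : ℝ | ∀ᶠ t in F, u t ≤ a}.Nonempty :=
    ⟨C, hC.mono fun t ht => (abs_le.mp ht).2⟩
  rw [Filter.limsup_eq] at hb
  obtain ⟨a, ha, hab⟩ := exists_lt_of_csInf_lt hne hb
  exact ha.mono fun t ht => lt_of_le_of_lt ht hab

private lemma tendsto_smul_pos {s : ℝ} (hs : 0 < s) :
    Tendsto (fun t : ℝ => s * t) (𝓝[>] 0) (𝓝[>] 0) := by
  have h1 : Tendsto (fun t : ℝ => s * t) (𝓝 0) (𝓝 0) := by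
    simpa using (tendsto_id (x := 𝓝 (0:ℝ))).const_mul s
  refine tendsto_nhdsWithin_of_tendsto_nhds_of_eventually_within _
    (h1.mono_left nhdsWithin_le_nhds) ?_
  exact eventually_nhdsWithin_of_forall (fun t ht => mul_pos hs ht)

/-- The weighted sum `e(y) = λ₁E(x₁,y)+⋯+λₙE(xₙ,y)`. -/
noncomputable def eFun (E : ℝ → ℝ → ℝ) {n : ℕ} (x lam : Fin n → ℝ) (y : ℝ) : ℝ :=
  ∑ i, lam i * E (x i) y

/-- Lower semideviation mean `LLD_E(x,λ) = inf {y ∈ I : e(y) ≤ 0}`. -/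
noncomputable def LLD (I : Set ℝ) (E : ℝ → ℝ → ℝ) {n : ℕ} (x lam : Fin n → ℝ) : ℝ :=
  sInf {y : ℝ | y ∈ I ∧ eFun E x lam y ≤ 0}

/-- Upper semideviation mean `UUD_E(x,λ) = sup {y ∈ I : e(y) ≥ 0}`. -/
noncomputable def UUD (I : Set ℝ) (E : ℝ → ℝ → ℝ) {n : ℕ} (x lam : Fin n → ℝ) : ℝ :=
  sSup {y : ℝ | y ∈ I ∧ 0 ≤ eFun E x lam y}

/-- `LD_E(x,λ) = inf {y ∈ I : e(y) < 0}`. -/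
noncomputable def LD (I : Set ℝ) (E : ℝ → ℝ → ℝ) {n : ℕ} (x lam : Fin n → ℝ) : ℝ :=
  sInf {y : ℝ | y ∈ I ∧ eFun E x lam y < 0}

/-- `UD_E(x,λ) = sup {y ∈ I : e(y) > 0}`. -/
noncomputable def UD (I : Set ℝ) (E : ℝ → ℝ → ℝ) {n : ℕ} (x lam : Fin n → ℝ) : ℝ :=
  sSup {y : ℝ | y ∈ I ∧ 0 < eFun E x lam y}

/-- A weight vector: nonnegative entries with positive sum. -/
def IsWeight {n : ℕ} (lam : Fin n → ℝ) : Prop :=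
  (∀ i, 0 ≤ lam i) ∧ 0 < ∑ i, lam i

/-- `E` is a semideviation on `I`: for distinct `x, y ∈ I` the sign of `E x y`
coincides with the sign of `x - y`. -/
def IsSemideviation (I : Set ℝ) (E : ℝ → ℝ → ℝ) : Prop :=
  ∀ x ∈ I, ∀ y ∈ I, x ≠ y → Real.sign (E x y) = Real.sign (x - y)

/-- `E` is a normalizable semideviation on `I`, with `d x = ∂₂E(x,x)`. -/
def IsNormalizable (I : Set ℝ) (E : ℝ → ℝ → ℝ) (d : ℝ → ℝ) : Prop :=
  IsSemideviation I E ∧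
  (∀ x ∈ I, ContinuousOn (fun y => E x y) I) ∧
  (∀ x ∈ I, HasDerivWithinAt (fun y => E x y) (d x) I x) ∧
  (∀ x ∈ I, d x < 0) ∧
  ContinuousOn d I

/-- The normalization `E*(x,y) = E(x,y)/(-∂₂E(y,y))`. -/
noncomputable def nrm (E : ℝ → ℝ → ℝ) (d : ℝ → ℝ) (x y : ℝ) : ℝ :=
  E x y / (-(d y))

/-- The filter `t → 0⁺` restricted to those `t` with `t • x ∈ Iⁿ`. -/
def homFilter (I : Set ℝ) {n : ℕ} (x : Fin n → ℝ) : Filter ℝ :=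
  (𝓝[>] (0:ℝ)) ⊓ Filter.principal {t : ℝ | ∀ i, t * x i ∈ I}

/-- `ℰ⁼_h(x,λ) = inf {y > 0 : Σᵢ λᵢ h(xᵢ/y) ≤ 0}`. -/
noncomputable def EEinf (h : ℝ → ℝ) {n : ℕ} (x lam : Fin n → ℝ) : ℝ :=
  sInf {y : ℝ | 0 < y ∧ ∑ i, lam i * h (x i / y) ≤ 0}

/-- `ℰ⁺_h(x,λ) = sup {y > 0 : Σᵢ λᵢ h(xᵢ/y) ≥ 0}`. -/
noncomputable def EEsup (h : ℝ → ℝ) {n : ℕ} (x lam : Fin n → ℝ) : ℝ :=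
  sSup {y : ℝ | 0 < y ∧ 0 ≤ ∑ i, lam i * h (x i / y)}

/-- Theorem: estimates of the lower and upper homogenizations of semideviation means
by the homogeneous semideviation means generated by `h̲_E` and `h̄_E`. -/
theorem statement10 (I : Set ℝ) (hIoc : I.OrdConnected) (hIo : IsOpen I)
    (hne : I.Nonempty) (hglb : IsGLB I 0) (E : ℝ → ℝ → ℝ) (d : ℝ → ℝ)
    (hE : IsNormalizable I E d) (hlo hhi : ℝ → ℝ)
    (hloDef : ∀ x : ℝ, 0 < x → hlo x =
      Filter.liminf (fun t : ℝ => nrm E d (x * t) t / t)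
        ((𝓝[>] (0:ℝ)) ⊓ Filter.principal {t : ℝ | x * t ∈ I ∧ t ∈ I}))
    (hhiDef : ∀ x : ℝ, 0 < x → hhi x =
      Filter.limsup (fun t : ℝ => nrm E d (x * t) t / t)
        ((𝓝[>] (0:ℝ)) ⊓ Filter.principal {t : ℝ | x * t ∈ I ∧ t ∈ I}))
    (hbdd : ∀ x : ℝ, 0 < x → ∃ C : ℝ,
      ∀ᶠ t in (𝓝[>] (0:ℝ)) ⊓ Filter.principal {t : ℝ | x * t ∈ I ∧ t ∈ I},
        |nrm E d (x * t) t / t| ≤ C)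
    (hsign : ∀ x : ℝ, 0 < x →
      Real.sign (hlo x) = Real.sign (x - 1) ∧ Real.sign (hhi x) = Real.sign (x - 1)) :
    ∀ (n : ℕ) (x lam : Fin n → ℝ), (∀ i, 0 < x i) → IsWeight lam →
      EEinf hlo x lam
          ≤ Filter.liminf (fun t : ℝ => UD I E (fun i => t * x i) lam / t) (homFilter I x) ∧
      Filter.limsup (fun t : ℝ => LD I E (fun i => t * x i) lam / t) (homFilter I x)
          ≤ EEsup hhi x lam := by
  obtain ⟨hsd, -, -, hdneg, -⟩ := hE
  obtain ⟨a, hapos, haI⟩ := exists_Ioc_subset I hIoc hIo hne hglb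
  have hElt : ∀ u ∈ I, ∀ v ∈ I, u < v → E u v < 0 := by
    intro u hu v hv huv
    have h := hsd u hu v hv (ne_of_lt huv)
    rw [Real.sign_of_neg (sub_neg.mpr huv)] at h
    exact sign_neg_iff'.mp h
  have hmemI : ∀ z : ℝ, 0 < z → ∀ᶠ t in 𝓝[>] (0:ℝ), z * t ∈ I := by
    intro z hz
    filter_upwards [Ioo_mem_nhdsGT_of_mem
      (Set.mem_Ico.mpr ⟨le_refl (0:ℝ), div_pos hapos hz⟩)] with t ht
    refine haI ⟨mul_pos hz ht.1, ?_⟩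
    have := mul_lt_mul_of_pos_left ht.2 hz
    rw [mul_div_cancel₀ _ (ne_of_gt hz)] at this
    exact this.le
  have htI : ∀ᶠ t in 𝓝[>] (0:ℝ), t ∈ I := by
    have := hmemI 1 one_pos
    simpa using this
  have hfil : ∀ z : ℝ, 0 < z →
      (𝓝[>] (0:ℝ)) ⊓ Filter.principal {t : ℝ | z * t ∈ I ∧ t ∈ I} = 𝓝[>] (0:ℝ) := by
    intro z hz
    exact inf_eq_left.mpr (le_principal_iff.mpr ((hmemI z hz).and htI))
  intro n x lam hxpos hlam
  obtain ⟨hnn, hsum⟩ := hlam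
  have hjex : ∃ j, 0 < lam j := by
    by_contra h
    push_neg at h
    have : ∑ i, lam i = 0 := Finset.sum_eq_zero fun i _ => le_antisymm (h i) (hnn i)
    rw [this] at hsum
    exact lt_irrefl _ hsum
  obtain ⟨j, hj⟩ := hjex
  have hfin : Nonempty (Fin n) := ⟨j⟩
  set M := ∑ i, x i with hM
  have hxM : ∀ i, x i ≤ M := fun i =>
    Finset.single_le_sum (fun k _ => (hxpos k).le) (Finset.mem_univ i)
  have hMpos : 0 < M := lt_of_lt_of_le (hxpos j) (hxM j)
  obtain ⟨i0, -, hi0⟩ := Finset.exists_mem_eq_inf' (Finset.univ_nonempty (α := Fin n)) x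
  set m := Finset.univ.inf' Finset.univ_nonempty x with hm
  have hmpos : 0 < m := hi0 ▸ hxpos i0
  have hmle : ∀ i, m ≤ x i := fun i => Finset.inf'_le x (Finset.mem_univ i)
  have hhom : homFilter I x = 𝓝[>] (0:ℝ) := by
    unfold homFilter
    refine inf_eq_left.mpr (le_principal_iff.mpr ?_)
    refine eventually_all.mpr fun i => ?_
    exact (hmemI (x i) (hxpos i)).mono fun t ht => by rwa [mul_comm] at ht
  have htxI : ∀ᶠ t in 𝓝[>] (0:ℝ), ∀ i, t * x i ∈ I :=
    eventually_all.mpr fun i =>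
      (hmemI (x i) (hxpos i)).mono fun t ht => by rwa [mul_comm] at ht
  have hΛpos : 0 < ∑ i, lam i := hsum
  constructor
  · -- liminf part
    rw [hhom]
    show sInf {y : ℝ | 0 < y ∧ ∑ i, lam i * hlo (x i / y) ≤ 0} ≤ _
    set S := {y : ℝ | 0 < y ∧ ∑ i, lam i * hlo (x i / y) ≤ 0} with hSdef
    have hlopos : ∀ z : ℝ, 1 < z → 0 < hlo z := by
      intro z hz
      have h := (hsign z (lt_trans one_pos hz)).1
      rw [Real.sign_of_pos (by linarith : (0:ℝ) < z - 1)] at h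
      exact sign_pos_iff'.mp h
    have hloneg : ∀ z : ℝ, 0 < z → z < 1 → hlo z < 0 := by
      intro z hz hz1
      have h := (hsign z hz).1
      rw [Real.sign_of_neg (by linarith : z - 1 < 0)] at h
      exact sign_neg_iff'.mp h
    have hSne : (M + 1) ∈ S := by
      refine ⟨by linarith, Finset.sum_nonpos fun i _ => ?_⟩
      refine mul_nonpos_of_nonneg_of_nonpos (hnn i) ?_
      refine (hloneg _ (div_pos (hxpos i) (by linarith)) ?_).le
      rw [div_lt_one (by linarith)]
      linarith [hxM i]
    have hSbd : ∀ y ∈ S, m ≤ y := by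
      intro y hy
      by_contra hlt
      push_neg at hlt
      have h1 : ∀ i, 1 < x i / y :=
        fun i => (one_lt_div hy.1).mpr (lt_of_lt_of_le hlt (hmle i))
      have hpos : 0 < ∑ i, lam i * hlo (x i / y) :=
        Finset.sum_pos' (fun i _ => mul_nonneg (hnn i) (hlopos _ (h1 i)).le)
          ⟨j, Finset.mem_univ j, mul_pos hj (hlopos _ (h1 j))⟩
      linarith [hy.2]
    have hSinfpos : 0 < sInf S := lt_of_lt_of_le hmpos (le_csInf ⟨_, hSne⟩ hSbd)
    by_contra hcon
    push_neg at hcon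
    set L := Filter.liminf (fun t : ℝ => UD I E (fun i => t * x i) lam / t) (𝓝[>] (0:ℝ))
      with hL
    obtain ⟨s, hs1, hs2⟩ := exists_between (max_lt hcon hSinfpos)
    have hsL : L < s := lt_of_le_of_lt (le_max_left _ _) hs1
    have hspos : 0 < s := lt_of_le_of_lt (le_max_right _ _) hs1
    have hsnot : s ∉ S := fun h => absurd (csInf_le ⟨m, hSbd⟩ h) (not_le.mpr hs2)
    have hcsum : 0 < ∑ i, lam i * hlo (x i / s) := by
      by_contra h
      push_neg at h
      exact hsnot ⟨hspos, h⟩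
    set ε := (∑ i, lam i * hlo (x i / s)) / (2 * ∑ i, lam i) with hε
    have hεpos : 0 < ε := div_pos hcsum (by positivity)
    have hev : ∀ i : Fin n, ∀ᶠ u in 𝓝[>] (0:ℝ),
        hlo (x i / s) - ε < nrm E d ((x i / s) * u) u / u := by
      intro i
      have hzi : 0 < x i / s := div_pos (hxpos i) hspos
      obtain ⟨C, hC⟩ := hbdd _ hzi
      rw [hfil _ hzi] at hC
      have hdef := hloDef _ hzi
      rw [hfil _ hzi] at hdef
      exact ev_liminf_lt _ _ C _ hC (by rw [← hdef]; linarith)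
    have hevsum : ∀ᶠ u in 𝓝[>] (0:ℝ),
        0 < ∑ i, lam i * (nrm E d ((x i / s) * u) u / u) := by
      filter_upwards [eventually_all.mpr hev] with u hu
      have h1 : ∑ i, lam i * (hlo (x i / s) - ε)
          ≤ ∑ i, lam i * (nrm E d ((x i / s) * u) u / u) :=
        Finset.sum_le_sum fun i _ => mul_le_mul_of_nonneg_left (hu i).le (hnn i)
      have h2 : ∑ i, lam i * (hlo (x i / s) - ε)
          = (∑ i, lam i * hlo (x i / s)) - (∑ i, lam i) * ε := by
        simp [mul_sub, Finset.sum_sub_distrib, ← Finset.sum_mul]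
      have h3 : (∑ i, lam i) * ε = (∑ i, lam i * hlo (x i / s)) / 2 := by
        rw [hε]
        field_simp
      linarith
    have hmul := tendsto_smul_pos hspos
    have hEv : ∀ᶠ t in 𝓝[>] (0:ℝ),
        s ≤ UD I E (fun i => t * x i) lam / t ∧
        UD I E (fun i => t * x i) lam / t ≤ M := by
      filter_upwards [hmul.eventually hevsum, hmemI s hspos, htxI,
        self_mem_nhdsWithin] with t h1 h2 h3 ht
      have htpos : 0 < t := ht
      have hstpos : 0 < s * t := mul_pos hspos htpos
      have hdlt : d (s * t) < 0 := hdneg _ h2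
      have harg : ∀ i, (x i / s) * (s * t) = t * x i := fun i => by
        field_simp
      simp only [harg] at h1
      have hstne : s * t ≠ 0 := ne_of_gt hstpos
      have hdne : d (s * t) ≠ 0 := ne_of_lt hdlt
      have hkey : eFun E (fun i => t * x i) lam (s * t)
          = ((s * t) * (-(d (s * t)))) * ∑ i, lam i * (nrm E d (t * x i) (s * t) / (s * t)) := by
        unfold eFun nrm
        rw [Finset.mul_sum]
        refine Finset.sum_congr rfl fun i _ => ?_
        have hdne' : d (t * s) ≠ 0 := by rwa [mul_comm t s]
        field_simp
      have hTpos : 0 < eFun E (fun i => t * x i) lam (s * t) := by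
        rw [hkey]
        exact mul_pos (mul_pos hstpos (neg_pos.mpr hdlt)) h1
      set T := {y : ℝ | y ∈ I ∧ 0 < eFun E (fun i => t * x i) lam y} with hT
      have hmemT : s * t ∈ T := ⟨h2, hTpos⟩
      have hTbd : ∀ y ∈ T, y ≤ t * M := by
        intro y hy
        by_contra hgt
        push_neg at hgt
        have hle : eFun E (fun i => t * x i) lam y ≤ 0 := by
          refine Finset.sum_nonpos fun i _ => ?_
          rcases (hnn i).lt_or_eq with h0 | h0
          · have hlt : t * x i < y :=
              lt_of_le_of_lt (mul_le_mul_of_nonneg_left (hxM i) htpos.le) hgt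
            exact mul_nonpos_of_nonneg_of_nonpos (hnn i) (hElt _ (h3 i) _ hy.1 hlt).le
          · rw [← h0, zero_mul]
        linarith [hy.2]
      have hUD : UD I E (fun i => t * x i) lam = sSup T := rfl
      constructor
      · rw [le_div_iff₀ htpos, hUD]
        exact le_csSup ⟨t * M, fun y hy => hTbd y hy⟩ hmemT
      · rw [div_le_iff₀ htpos, hUD]
        calc sSup T ≤ t * M := csSup_le ⟨_, hmemT⟩ hTbd
        _ = M * t := mul_comm _ _
    have hcob : IsCoboundedUnder (· ≥ ·) (𝓝[>] (0:ℝ))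
        (fun t : ℝ => UD I E (fun i => t * x i) lam / t) :=
      IsCoboundedUnder.of_frequently_le (α := ℝ) ((hEv.mono fun t h => h.2).frequently)
    have hfinal : s ≤ L := le_liminf_of_le hcob (hEv.mono fun t h => h.1)
    linarith
  · -- limsup part
    rw [hhom]
    show _ ≤ sSup {y : ℝ | 0 < y ∧ 0 ≤ ∑ i, lam i * hhi (x i / y)}
    set S := {y : ℝ | 0 < y ∧ 0 ≤ ∑ i, lam i * hhi (x i / y)} with hSdef
    have hhipos : ∀ z : ℝ, 1 < z → 0 < hhi z := by
      intro z hz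
      have h := (hsign z (lt_trans one_pos hz)).2
      rw [Real.sign_of_pos (by linarith : (0:ℝ) < z - 1)] at h
      exact sign_pos_iff'.mp h
    have hhineg : ∀ z : ℝ, 0 < z → z < 1 → hhi z < 0 := by
      intro z hz hz1
      have h := (hsign z hz).2
      rw [Real.sign_of_neg (by linarith : z - 1 < 0)] at h
      exact sign_neg_iff'.mp h
    have hSne : (m / 2) ∈ S := by
      refine ⟨by linarith, Finset.sum_nonneg fun i _ => ?_⟩
      refine mul_nonneg (hnn i) ?_
      refine (hhipos _ ?_).le
      rw [lt_div_iff₀ (by linarith : (0:ℝ) < m / 2)]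
      calc (1:ℝ) * (m / 2) = m / 2 := one_mul _
      _ < m := by linarith
      _ ≤ x i := hmle i
    have hSbd : ∀ y ∈ S, y ≤ M := by
      intro y hy
      by_contra hgt
      push_neg at hgt
      have h1 : ∀ i, x i / y < 1 := fun i =>
        (div_lt_one hy.1).mpr (lt_of_le_of_lt (hxM i) hgt)
      have hneg : ∑ i, lam i * hhi (x i / y) < 0 := by
        have := Finset.sum_pos' (fun i (_ : i ∈ Finset.univ) =>
          mul_nonneg (hnn i) (neg_nonneg.mpr
            (hhineg _ (div_pos (hxpos i) hy.1) (h1 i)).le))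
          ⟨j, Finset.mem_univ j, mul_pos hj (neg_pos.mpr
            (hhineg _ (div_pos (hxpos j) hy.1) (h1 j)))⟩
        have heq : ∑ i, lam i * -hhi (x i / y) = -∑ i, lam i * hhi (x i / y) := by
          simp [mul_neg, Finset.sum_neg_distrib]
        rw [heq] at this
        linarith
      linarith [hy.2]
    have hSsuppos : 0 < sSup S :=
      lt_of_lt_of_le (by linarith : (0:ℝ) < m / 2) (le_csSup ⟨M, hSbd⟩ hSne)
    by_contra hcon
    push_neg at hcon
    set L := Filter.limsup (fun t : ℝ => LD I E (fun i => t * x i) lam / t) (𝓝[>] (0:ℝ))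
      with hL
    obtain ⟨s, hs1, hs2⟩ := exists_between hcon
    have hspos : 0 < s := lt_trans hSsuppos hs1
    have hsnot : s ∉ S := fun h => absurd (le_csSup ⟨M, hSbd⟩ h) (not_le.mpr hs1)
    have hcsum : ∑ i, lam i * hhi (x i / s) < 0 := by
      by_contra h
      push_neg at h
      exact hsnot ⟨hspos, h⟩
    set ε := (-∑ i, lam i * hhi (x i / s)) / (2 * ∑ i, lam i) with hε
    have hεpos : 0 < ε := div_pos (by linarith) (by positivity)
    have hev : ∀ i : Fin n, ∀ᶠ u in 𝓝[>] (0:ℝ),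
        nrm E d ((x i / s) * u) u / u < hhi (x i / s) + ε := by
      intro i
      have hzi : 0 < x i / s := div_pos (hxpos i) hspos
      obtain ⟨C, hC⟩ := hbdd _ hzi
      rw [hfil _ hzi] at hC
      have hdef := hhiDef _ hzi
      rw [hfil _ hzi] at hdef
      exact ev_limsup_gt _ _ C _ hC (by rw [← hdef]; linarith)
    have hevsum : ∀ᶠ u in 𝓝[>] (0:ℝ),
        ∑ i, lam i * (nrm E d ((x i / s) * u) u / u) < 0 := by
      filter_upwards [eventually_all.mpr hev] with u hu
      have h1 : ∑ i, lam i * (nrm E d ((x i / s) * u) u / u)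
          ≤ ∑ i, lam i * (hhi (x i / s) + ε) :=
        Finset.sum_le_sum fun i _ => mul_le_mul_of_nonneg_left (hu i).le (hnn i)
      have h2 : ∑ i, lam i * (hhi (x i / s) + ε)
          = (∑ i, lam i * hhi (x i / s)) + (∑ i, lam i) * ε := by
        simp [mul_add, Finset.sum_add_distrib, ← Finset.sum_mul]
      have h3 : (∑ i, lam i) * ε = (-∑ i, lam i * hhi (x i / s)) / 2 := by
        rw [hε]
        field_simp
      linarith
    have hmul := tendsto_smul_pos hspos
    have hEv : ∀ᶠ t in 𝓝[>] (0:ℝ),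
        LD I E (fun i => t * x i) lam / t ≤ s ∧
        0 ≤ LD I E (fun i => t * x i) lam / t := by
      filter_upwards [hmul.eventually hevsum, hmemI s hspos, htxI,
        self_mem_nhdsWithin] with t h1 h2 h3 ht
      have htpos : 0 < t := ht
      have hstpos : 0 < s * t := mul_pos hspos htpos
      have hdlt : d (s * t) < 0 := hdneg _ h2
      have harg : ∀ i, (x i / s) * (s * t) = t * x i := fun i => by
        field_simp
      simp only [harg] at h1
      have hstne : s * t ≠ 0 := ne_of_gt hstpos
      have hdne : d (s * t) ≠ 0 := ne_of_lt hdlt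
      have hkey : eFun E (fun i => t * x i) lam (s * t)
          = ((s * t) * (-(d (s * t)))) * ∑ i, lam i * (nrm E d (t * x i) (s * t) / (s * t)) := by
        unfold eFun nrm
        rw [Finset.mul_sum]
        refine Finset.sum_congr rfl fun i _ => ?_
        have hdne' : d (t * s) ≠ 0 := by rwa [mul_comm t s]
        field_simp
      have hTneg : eFun E (fun i => t * x i) lam (s * t) < 0 := by
        rw [hkey]
        exact mul_neg_of_pos_of_neg (mul_pos hstpos (neg_pos.mpr hdlt)) h1
      set T := {y : ℝ | y ∈ I ∧ eFun E (fun i => t * x i) lam y < 0} with hT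
      have hmemT : s * t ∈ T := ⟨h2, hTneg⟩
      have hTbd : BddBelow T := ⟨0, fun y hy => hglb.1 hy.1⟩
      have hLD : LD I E (fun i => t * x i) lam = sInf T := rfl
      constructor
      · rw [div_le_iff₀ htpos, hLD]
        calc sInf T ≤ s * t := csInf_le hTbd hmemT
        _ = s * t := rfl
      · refine div_nonneg ?_ htpos.le
        rw [hLD]
        exact le_csInf ⟨_, hmemT⟩ fun y hy => hglb.1 hy.1
    have hcob : IsCoboundedUnder (· ≤ ·) (𝓝[>] (0:ℝ))
        (fun t : ℝ => LD I E (fun i => t * x i) lam / t) :=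
      IsCoboundedUnder.of_frequently_ge (α := ℝ) ((hEv.mono fun t h => h.2).frequently)
    have hfinal : L ≤ s := limsup_le_of_le hcob (hEv.mono fun t h => h.1)
    linarith
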